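/- Let ρ be a Sylvester rank function on the category of finitely presented right R-modules with ρ(R) = 1. Let α : R → M be a map with ρ(α) = 0 (i.e. ρ(M) = ρ(coker α)) and β : L → M any map. Then ρ((β, α) : L ⊕ R → M) = ρ(β), where ρ of a map φ : A → B is defined as ρ(B) − ρ(coker φ). -/

import Mathlib

open CategoryTheory CategoryTheory.Limits

universe u

/-- A Sylvester rank function on the category of finitely presented right `R`-modules:
a map from (finitely presented) `R`-modules to `ℕ`, invariant under isomorphism,
additive on direct sums, and satisfying `ρ(coker f) ≤ ρ(B) ≤ ρ(A) + ρ(coker f)` for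
every map `f : A ⟶ B` of finitely presented modules. -/
structure SylvesterRankFP (R : Type u) [Ring R] where
  rk : ModuleCat.{u} R → ℕ
  rk_iso : ∀ {A B : ModuleCat.{u} R}, Module.FinitePresentation R A →
    Module.FinitePresentation R B → (A ≅ B) → rk A = rk B
  rk_biprod : ∀ (A B : ModuleCat.{u} R), Module.FinitePresentation R A →
    Module.FinitePresentation R B → rk (A ⊞ B) = rk A + rk B
  rk_coker_le : ∀ {A B : ModuleCat.{u} R} (f : A ⟶ B), Module.FinitePresentation R A →
    Module.FinitePresentation R B → rk (cokernel f) ≤ rk B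
  rk_le : ∀ {A B : ModuleCat.{u} R} (f : A ⟶ B), Module.FinitePresentation R A →
    Module.FinitePresentation R B → rk B ≤ rk A + rk (cokernel f)

/-- A map `f : A ⟶ B` is `ρ`-full if `ρ(A) = ρ(B)` and `ρ(coker f) = 0`. -/
def SylvesterRankFP.IsRhoFull {R : Type u} [Ring R] (ρ : SylvesterRankFP R)
    {A B : ModuleCat.{u} R} (f : A ⟶ B) : Prop :=
  ρ.rk A = ρ.rk B ∧ ρ.rk (cokernel f) = 0



section Aux
variable {R : Type u} [Ring R] {M N : Type u} [AddCommGroup M] [Module R M]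
  [AddCommGroup N] [Module R N]

lemma fp_of_equiv (h : Module.FinitePresentation R M) (e : M ≃ₗ[R] N) :
    Module.FinitePresentation R N :=
  Module.finitePresentation_of_surjective e.toLinearMap e.surjective
    (by rw [LinearMap.ker_eq_bot.mpr e.injective]; exact Submodule.fg_bot)

lemma fp_quot (h : Module.FinitePresentation R M) {A : Submodule R M} (hA : A.FG) :
    Module.FinitePresentation R (M ⧸ A) :=
  Module.finitePresentation_of_surjective A.mkQ A.mkQ_surjective (by rwa [Submodule.ker_mkQ])

lemma fp_prod (hM : Module.FinitePresentation R M) (hN : Module.FinitePresentation R N) :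
    Module.FinitePresentation R (M × N) := by
  obtain ⟨s, hs, hs'⟩ := hM
  obtain ⟨t, ht, ht'⟩ := hN
  let l : ((s →₀ R) × (t →₀ R)) →ₗ[R] M × N :=
    (Finsupp.linearCombination R ((↑) : s → M)).prodMap
      (Finsupp.linearCombination R ((↑) : t → N))
  have h1 : Function.Surjective (Finsupp.linearCombination R ((↑) : s → M)) := by
    rw [← LinearMap.range_eq_top, Finsupp.range_linearCombination, Subtype.range_coe_subtype,
      Finset.setOf_mem, ← hs]
  have h2 : Function.Surjective (Finsupp.linearCombination R ((↑) : t → N)) := by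
    rw [← LinearMap.range_eq_top, Finsupp.range_linearCombination, Subtype.range_coe_subtype,
      Finset.setOf_mem, ← ht]
  have hl : Function.Surjective l := by
    rintro ⟨m, n⟩
    obtain ⟨x, hx⟩ := h1 m
    obtain ⟨y, hy⟩ := h2 n
    exact ⟨(x, y), by simp [l, LinearMap.prodMap_apply, hx, hy]⟩
  exact Module.finitePresentation_of_free_of_surjective l hl
    (by rw [LinearMap.ker_prodMap]; exact Submodule.FG.prod hs' ht')

/-- the key algebraic equivalence -/
noncomputable def quotProdEquiv (A B : Submodule R M) :
    (((M ⧸ A) × (M ⧸ B)) ⧸ LinearMap.range (A.mkQ.prod B.mkQ)) ≃ₗ[R] M ⧸ (A ⊔ B) := by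
  let φ : (M ⧸ A) × (M ⧸ B) →ₗ[R] M ⧸ (A ⊔ B) :=
    (Submodule.liftQ A (A ⊔ B).mkQ (by rw [Submodule.ker_mkQ]; exact le_sup_left)).comp
      (LinearMap.fst R _ _) -
    (Submodule.liftQ B (A ⊔ B).mkQ (by rw [Submodule.ker_mkQ]; exact le_sup_right)).comp
      (LinearMap.snd R _ _)
  have hφ : Function.Surjective φ := by
    intro y
    obtain ⟨x, rfl⟩ := (A ⊔ B).mkQ_surjective y
    exact ⟨(A.mkQ x, 0), by simp [φ]⟩
  have hker : LinearMap.range (A.mkQ.prod B.mkQ) = LinearMap.ker φ := by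
    apply le_antisymm
    · rintro _ ⟨x, rfl⟩
      simp [φ, LinearMap.mem_ker]
    · rintro ⟨x, y⟩ hxy
      obtain ⟨x, rfl⟩ := A.mkQ_surjective x
      obtain ⟨y, rfl⟩ := B.mkQ_surjective y
      simp only [φ, LinearMap.mem_ker, LinearMap.sub_apply, LinearMap.comp_apply,
        LinearMap.fst_apply, LinearMap.snd_apply, Submodule.liftQ_apply, sub_eq_zero,
        Submodule.mkQ_apply] at hxy
      have hmem : x - y ∈ A ⊔ B := (Submodule.Quotient.eq _).mp hxy
      obtain ⟨a, ha, b, hb, hab⟩ := Submodule.mem_sup.mp hmem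
      have ha0 : A.mkQ a = 0 := by
        rwa [Submodule.mkQ_apply, Submodule.Quotient.mk_eq_zero]
      have hb0 : B.mkQ b = 0 := by
        rwa [Submodule.mkQ_apply, Submodule.Quotient.mk_eq_zero]
      have h1 : A.mkQ (x - a) = A.mkQ x := by rw [map_sub, ha0, sub_zero]
      have hyb : x - a = y + b := by
        have hx : x = a + b + y := by rw [hab]; abel
        rw [hx]; abel
      have h2 : B.mkQ (x - a) = B.mkQ y := by rw [hyb, map_add, hb0, add_zero]
      refine ⟨x - a, ?_⟩
      simp only [LinearMap.prod_apply, Function.prod]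
      exact Prod.ext h1 h2
  exact (Submodule.quotEquivOfEq _ _ hker) ≪≫ₗ φ.quotKerEquivOfSurjective hφ

end Aux

section Cat
variable {R : Type u} [Ring R]

lemma range_desc {L M : ModuleCat.{u} R} (β : L ⟶ M) (α : ModuleCat.of R R ⟶ M) :
    LinearMap.range (biprod.desc β α).hom = LinearMap.range β.hom ⊔ LinearMap.range α.hom := by
  apply le_antisymm
  · rintro _ ⟨x, rfl⟩
    have hx : (biprod.inl : L ⟶ L ⊞ ModuleCat.of R R)
          ((biprod.fst : L ⊞ ModuleCat.of R R ⟶ L) x) +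
        (biprod.inr : ModuleCat.of R R ⟶ L ⊞ ModuleCat.of R R)
          ((biprod.snd : L ⊞ ModuleCat.of R R ⟶ ModuleCat.of R R) x) = x :=
      congrArg (fun f => f x) (biprod.total (X := L) (Y := ModuleCat.of R R))
    rw [← hx, map_add]
    have hβ := congrArg (fun f => f ((biprod.fst : L ⊞ ModuleCat.of R R ⟶ L) x))
      (biprod.inl_desc β α)
    have hα := congrArg
      (fun f => f ((biprod.snd : L ⊞ ModuleCat.of R R ⟶ ModuleCat.of R R) x))
      (biprod.inr_desc β α)
    exact Submodule.add_mem_sup ⟨_, hβ.symm⟩ ⟨_, hα.symm⟩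
  · rw [sup_le_iff]
    constructor
    · rintro _ ⟨x, rfl⟩
      have h := congrArg (fun f => f x) (biprod.inl_desc β α)
      exact ⟨(biprod.inl : L ⟶ L ⊞ ModuleCat.of R R) x, h⟩
    · rintro _ ⟨x, rfl⟩
      have h := congrArg (fun f => f x) (biprod.inr_desc β α)
      exact ⟨(biprod.inr : ModuleCat.of R R ⟶ L ⊞ ModuleCat.of R R) x, h⟩

end Cat

section Main
variable {R : Type u} [Ring R]

lemma rk_coker_eq (ρ : SylvesterRankFP R) {A B : ModuleCat.{u} R} (f : A ⟶ B)
    {S : Submodule R (↑B)} (hS : LinearMap.range f.hom = S)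
    (hQ : Module.FinitePresentation R (↑B ⧸ S)) :
    ρ.rk (cokernel f) = ρ.rk (ModuleCat.of R (↑B ⧸ S)) := by
  subst hS
  have e : ↑(cokernel f) ≃ₗ[R] (↑B ⧸ LinearMap.range f.hom) :=
    (ModuleCat.cokernelIsoRangeQuotient f).toLinearEquiv
  exact ρ.rk_iso (fp_of_equiv hQ e.symm) hQ (ModuleCat.cokernelIsoRangeQuotient f)

end Main

/-- Let `ρ` be a Sylvester rank function on finitely presented right `R`-modules with
`ρ(R) = 1`.  If `α : R → M` has `ρ(α) = 0` (i.e. `ρ(coker α) = ρ(M)`) and `β : L → M` is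
any map, then `ρ((β, α) : L ⊕ R → M) = ρ(β)`, where `ρ(φ : A ⟶ B) = ρ(B) - ρ(coker φ)`. -/
theorem rank_desc_eq_rank_of_rank_zero {R : Type u} [Ring R] (ρ : SylvesterRankFP R)
    (hR : ρ.rk (ModuleCat.of R R) = 1)
    {L M : ModuleCat.{u} R}
    (hL : Module.FinitePresentation R L) (hM : Module.FinitePresentation R M)
    (α : ModuleCat.of R R ⟶ M) (hα : ρ.rk (cokernel α) = ρ.rk M)
    (β : L ⟶ M) :
    ρ.rk M - ρ.rk (cokernel (biprod.desc β α)) = ρ.rk M - ρ.rk (cokernel β) := by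
  haveI := hL
  haveI := hM
  set A := LinearMap.range β.hom with hA
  set B := LinearMap.range α.hom with hB
  have hAfg : A.FG := by
    rw [hA, LinearMap.range_eq_map]; exact Module.Finite.fg_top.map β.hom
  have hBfg : B.FG := by
    rw [hB, LinearMap.range_eq_map]; exact (Module.Finite.fg_top (R := R) (M := R)).map α.hom
  have hfpQA : Module.FinitePresentation R (↑M ⧸ A) := fp_quot hM hAfg
  have hfpQB : Module.FinitePresentation R (↑M ⧸ B) := fp_quot hM hBfg
  have hfpQAB : Module.FinitePresentation R (↑M ⧸ (A ⊔ B)) := fp_quot hM (hAfg.sup hBfg)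
  have hfpR : Module.FinitePresentation R R := inferInstance
  have e1 : ρ.rk (cokernel β) = ρ.rk (ModuleCat.of R (↑M ⧸ A)) :=
    rk_coker_eq ρ β rfl hfpQA
  have e2 : ρ.rk (cokernel α) = ρ.rk (ModuleCat.of R (↑M ⧸ B)) :=
    rk_coker_eq ρ α rfl hfpQB
  have e3 : ρ.rk (cokernel (biprod.desc β α)) = ρ.rk (ModuleCat.of R (↑M ⧸ (A ⊔ B))) :=
    rk_coker_eq ρ (biprod.desc β α) (range_desc β α) hfpQAB
  -- Step 1 : rk (M ⧸ (A ⊔ B)) ≤ rk (M ⧸ A)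
  let α' : ModuleCat.of R R ⟶ ModuleCat.of R (↑M ⧸ A) := ModuleCat.ofHom (A.mkQ.comp α.hom)
  have hrange : LinearMap.range α'.hom = B.map A.mkQ := by
    show LinearMap.range (A.mkQ.comp α.hom) = _
    rw [LinearMap.range_comp, hB]
  have hfpQ' : Module.FinitePresentation R ((↑M ⧸ A) ⧸ B.map A.mkQ) :=
    fp_of_equiv hfpQAB (Submodule.quotientQuotientEquivQuotientSup A B).symm
  have e4 : ρ.rk (cokernel α') = ρ.rk (ModuleCat.of R ((↑M ⧸ A) ⧸ B.map A.mkQ)) :=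
    rk_coker_eq ρ α' hrange hfpQ'
  have e5 : ρ.rk (ModuleCat.of R ((↑M ⧸ A) ⧸ B.map A.mkQ)) =
      ρ.rk (ModuleCat.of R (↑M ⧸ (A ⊔ B))) :=
    ρ.rk_iso hfpQ' hfpQAB (Submodule.quotientQuotientEquivQuotientSup A B).toModuleIso
  have ineq1 : ρ.rk (ModuleCat.of R (↑M ⧸ (A ⊔ B))) ≤ ρ.rk (ModuleCat.of R (↑M ⧸ A)) := by
    have h := ρ.rk_coker_le α' hfpR hfpQA
    rw [e4, e5] at h
    exact h
  -- Step 2 : rk (M ⧸ A) ≤ rk (M ⧸ (A ⊔ B))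
  let ψ : M ⟶ ModuleCat.of R ((↑M ⧸ A) × (↑M ⧸ B)) := ModuleCat.ofHom (A.mkQ.prod B.mkQ)
  have hfpP : Module.FinitePresentation R ((↑M ⧸ A) × (↑M ⧸ B)) := fp_prod hfpQA hfpQB
  have hfpQψ : Module.FinitePresentation R
      (((↑M ⧸ A) × (↑M ⧸ B)) ⧸ LinearMap.range (A.mkQ.prod B.mkQ)) :=
    fp_of_equiv hfpQAB (quotProdEquiv A B).symm
  have e6 : ρ.rk (cokernel ψ) = ρ.rk (ModuleCat.of R
      (((↑M ⧸ A) × (↑M ⧸ B)) ⧸ LinearMap.range (A.mkQ.prod B.mkQ))) :=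
    rk_coker_eq ρ ψ rfl hfpQψ
  have e7 : ρ.rk (cokernel ψ) = ρ.rk (ModuleCat.of R (↑M ⧸ (A ⊔ B))) := by
    rw [e6]
    exact ρ.rk_iso hfpQψ hfpQAB (quotProdEquiv A B).toModuleIso
  have hfpBi : Module.FinitePresentation R
      ↑(ModuleCat.of R (↑M ⧸ A) ⊞ ModuleCat.of R (↑M ⧸ B)) :=
    fp_of_equiv hfpP (ModuleCat.biprodIsoProd (ModuleCat.of R (↑M ⧸ A))
      (ModuleCat.of R (↑M ⧸ B))).symm.toLinearEquiv
  have e8 : ρ.rk (ModuleCat.of R ((↑M ⧸ A) × (↑M ⧸ B))) =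
      ρ.rk (ModuleCat.of R (↑M ⧸ A)) + ρ.rk (ModuleCat.of R (↑M ⧸ B)) := by
    rw [← ρ.rk_biprod _ _ hfpQA hfpQB]
    exact ρ.rk_iso hfpP hfpBi
      (ModuleCat.biprodIsoProd (ModuleCat.of R (↑M ⧸ A)) (ModuleCat.of R (↑M ⧸ B))).symm
  have hαM : ρ.rk (ModuleCat.of R (↑M ⧸ B)) = ρ.rk M := by rw [← e2, hα]
  have ineq2 : ρ.rk (ModuleCat.of R (↑M ⧸ A)) ≤ ρ.rk (ModuleCat.of R (↑M ⧸ (A ⊔ B))) := by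
    have h := ρ.rk_le ψ hM hfpP
    rw [e7, e8, hαM] at h
    omega
  rw [e1, e3]
  omega
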